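/- arXiv:1312.0525 — 2 statements merged into one kernel-verified Lean document; each statement's English description precedes it below -/
import Mathlib

section
/- Let u, û ∈ ℂ^{n₁} and v, v̂ ∈ ℂ^{n₂} be unit vectors. Then ‖uv* − ûv̂*‖_F ≥ (1/√2)·‖vv* − v̂v̂*‖_F. -/
open scoped ComplexConjugate
open Complex Finset

/-- Outer product `u v*` of two complex vectors. -/
noncomputable def outerProd {n₁ n₂ : ℕ} (u : EuclideanSpace ℂ (Fin n₁))
    (v : EuclideanSpace ℂ (Fin n₂)) : Matrix (Fin n₁) (Fin n₂) ℂ :=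
  fun i j => u i * conj (v j)

/-- Frobenius norm of a complex matrix. -/
noncomputable def frob {n₁ n₂ : ℕ} (M : Matrix (Fin n₁) (Fin n₂) ℂ) : ℝ :=
  Real.sqrt (∑ i, ∑ j, ‖M i j‖ ^ 2)

lemma sum_normSq_key {n₁ n₂ : ℕ} (u uhat : Fin n₁ → ℂ) (v vhat : Fin n₂ → ℂ) :
    ∑ i, ∑ j, ‖u i * conj (v j) - uhat i * conj (vhat j)‖ ^ 2
      = (∑ i, ‖u i‖ ^ 2) * (∑ j, ‖v j‖ ^ 2)
        + (∑ i, ‖uhat i‖ ^ 2) * (∑ j, ‖vhat j‖ ^ 2)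
        - 2 * ((∑ i, u i * conj (uhat i)) * conj (∑ j, v j * conj (vhat j))).re := by
  have h : ∀ z : ℂ, ‖z‖ ^ 2 = normSq z := fun z => by
    rw [normSq_eq_norm_sq]
  simp only [h]
  have expand : ∀ i j, normSq (u i * conj (v j) - uhat i * conj (vhat j))
      = normSq (u i) * normSq (v j) + normSq (uhat i) * normSq (vhat j)
        - 2 * ((u i * conj (uhat i)) * (conj (v j) * vhat j)).re := by
    intro i j
    rw [normSq_sub, normSq_mul, normSq_mul, normSq_conj, normSq_conj]
    ring_nf
    congr 2
    congr 1
    simp [map_mul]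
    ring
  have e2 : ((∑ i, u i * conj (uhat i)) * conj (∑ j, v j * conj (vhat j))).re
      = ∑ i, ∑ j, ((u i * conj (uhat i)) * (conj (v j) * vhat j)).re := by
    rw [map_sum]
    simp only [map_mul, Complex.conj_conj]
    rw [Finset.sum_mul_sum]
    rw [Complex.re_sum]
    refine Finset.sum_congr rfl fun i _ => ?_
    rw [Complex.re_sum]
  simp only [expand, e2]
  rw [Finset.sum_mul_sum, Finset.sum_mul_sum, Finset.mul_sum, ← Finset.sum_add_distrib,
    ← Finset.sum_sub_distrib]
  refine Finset.sum_congr rfl fun i _ => ?_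
  rw [Finset.mul_sum, ← Finset.sum_add_distrib, ← Finset.sum_sub_distrib]

lemma sum_norm_sq_of_unit {n : ℕ} (u : EuclideanSpace ℂ (Fin n)) (hu : ‖u‖ = 1) :
    ∑ i, ‖u i‖ ^ 2 = 1 := by
  have := EuclideanSpace.norm_eq u
  rw [hu] at this
  have h0 : (0:ℝ) ≤ ∑ i, ‖u i‖ ^ 2 := Finset.sum_nonneg fun i _ => sq_nonneg _
  nlinarith [Real.sq_sqrt h0, this]

lemma inner_abs_le {n : ℕ} (u uhat : EuclideanSpace ℂ (Fin n))
    (hu : ‖u‖ = 1) (huhat : ‖uhat‖ = 1) :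
    ‖∑ i, u i * conj (uhat i)‖ ≤ 1 := by
  have : (∑ i, u i * conj (uhat i)) = inner ℂ uhat u := by
    rw [PiLp.inner_apply]
    exact Finset.sum_congr rfl fun i _ => by rw [RCLike.inner_apply]
  rw [this]
  calc ‖(inner ℂ uhat u : ℂ)‖ ≤ ‖uhat‖ * ‖u‖ := norm_inner_le_norm _ _
    _ = 1 := by rw [hu, huhat]; ring


/-- For unit vectors, `‖uv* − ûv̂*‖_F ≥ (1/√2)·‖vv* − v̂v̂*‖_F`. -/
theorem frob_outer_sub_outer_ge {n₁ n₂ : ℕ}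
    (u uhat : EuclideanSpace ℂ (Fin n₁)) (v vhat : EuclideanSpace ℂ (Fin n₂))
    (hu : ‖u‖ = 1) (huhat : ‖uhat‖ = 1) (hv : ‖v‖ = 1) (hvhat : ‖vhat‖ = 1) :
    (1 / Real.sqrt 2) * frob (outerProd v v - outerProd vhat vhat)
      ≤ frob (outerProd u v - outerProd uhat vhat) := by
  have entry : ∀ {m k : ℕ} (a b : EuclideanSpace ℂ (Fin m)) (c d : EuclideanSpace ℂ (Fin k)) (i : Fin m) (j : Fin k),
      (outerProd a c - outerProd b d) i j = a i * conj (c j) - b i * conj (d j) := by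
    intro m k a b c d i j; rfl
  set c : ℂ := ∑ i, u i * conj (uhat i) with hc
  set d : ℂ := ∑ j, v j * conj (vhat j) with hd
  have hcle : ‖c‖ ≤ 1 := inner_abs_le u uhat hu huhat
  have hdle : ‖d‖ ≤ 1 := inner_abs_le v vhat hv hvhat
  have S1 : ∑ i, ∑ j, ‖(outerProd u v - outerProd uhat vhat) i j‖ ^ 2
      = 2 - 2 * (c * conj d).re := by
    simp only [entry]
    rw [sum_normSq_key, sum_norm_sq_of_unit u hu, sum_norm_sq_of_unit uhat huhat,
      sum_norm_sq_of_unit v hv, sum_norm_sq_of_unit vhat hvhat]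
    ring
  have S2 : ∑ i, ∑ j, ‖(outerProd v v - outerProd vhat vhat) i j‖ ^ 2
      = 2 - 2 * ‖d‖ ^ 2 := by
    simp only [entry]
    rw [sum_normSq_key, sum_norm_sq_of_unit v hv, sum_norm_sq_of_unit vhat hvhat]
    have : (d * conj d).re = ‖d‖ ^ 2 := by
      rw [Complex.mul_conj, Complex.ofReal_re, Complex.normSq_eq_norm_sq]
    rw [this]; ring
  have hre : (c * conj d).re ≤ ‖d‖ := by
    calc (c * conj d).re ≤ ‖c * conj d‖ := Complex.re_le_norm _
      _ = ‖c‖ * ‖d‖ := by rw [norm_mul, RCLike.norm_conj]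
      _ ≤ 1 * ‖d‖ := by gcongr
      _ = ‖d‖ := one_mul _
  unfold frob
  rw [S1, S2]
  have h2 : (0:ℝ) < Real.sqrt 2 := Real.sqrt_pos.2 (by norm_num)
  have key : (2 - 2 * ‖d‖ ^ 2) / 2 ≤ 2 - 2 * (c * conj d).re := by
    nlinarith [sq_nonneg (‖d‖ - 1), norm_nonneg d]
  have hnn : (0:ℝ) ≤ 2 - 2 * ‖d‖ ^ 2 := by nlinarith [norm_nonneg d]
  calc (1 / Real.sqrt 2) * Real.sqrt (2 - 2 * ‖d‖ ^ 2)
      = Real.sqrt ((2 - 2 * ‖d‖ ^ 2) / 2) := by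
        rw [Real.sqrt_div hnn]
        ring
      _ ≤ Real.sqrt (2 - 2 * (c * conj d).re) := Real.sqrt_le_sqrt key
end

section
/- Let A : ℂ^{n₁×n₂} → ℂ^m satisfy (1−δ)‖Z‖_F² ≤ ‖A(Z)‖₂² ≤ (1+δ)‖Z‖_F² for all Z in a class C of matrices that contains both X − u_t v_t* and P_{R(u_t)^⊥} X, where 0 ≤ δ < 1. Suppose v_t is the least-squares solution v_t = argmin_y ‖A(X) − A(u_t y*)‖₂ (so that A(X − u_t v_t*) = A(P_{R(u_t)^⊥} X) in the noise-free case and ‖A(X − u_t v_t*)‖₂ ≤ ‖A(P_{R(u_t)^⊥} X)‖₂ in general). Then ‖X − u_t v_t*‖_F ≤ √((1+δ)/(1−δ)) · ‖X‖_F · sin θ_t, where θ_t is the angle between span(u) of the rank-one X = λuv* and span(u_t). -/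
open scoped ComplexConjugate

/-- ℓ₂ norm of a complex vector given as a plain function. -/
noncomputable def vnorm {n : ℕ} (x : Fin n → ℂ) : ℝ :=
  Real.sqrt (∑ i, ‖x i‖ ^ 2)

lemma frob_outer {n₁ n₂ : ℕ} (a : Fin n₁ → ℂ) (b : Fin n₂ → ℂ) :
    frob (fun i j => a i * conj (b j)) = vnorm a * vnorm b := by
  unfold frob vnorm
  rw [← Real.sqrt_mul (by positivity), Finset.sum_mul_sum]
  refine congrArg _ (Finset.sum_congr rfl fun i _ => Finset.sum_congr rfl fun j _ => ?_)
  simp [norm_mul, mul_pow, RCLike.norm_conj]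

lemma frob_nonneg {n₁ n₂ : ℕ} (M : Matrix (Fin n₁) (Fin n₂) ℂ) : 0 ≤ frob M :=
  Real.sqrt_nonneg _

lemma vnorm_smul {n : ℕ} (z : ℂ) (x : Fin n → ℂ) :
    vnorm (fun i => z * x i) = ‖z‖ * vnorm x := by
  unfold vnorm
  simp only [norm_mul, mul_pow]
  rw [← Finset.mul_sum, Real.sqrt_mul (by positivity), Real.sqrt_sq (norm_nonneg z)]

lemma vnorm_eq_norm {n : ℕ} (x : EuclideanSpace ℂ (Fin n)) :
    vnorm (fun i => x i) = ‖x‖ := by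
  rw [EuclideanSpace.norm_eq]; rfl

/-- Least-squares update bound: if `A` satisfies the two-sided RIP on a class `C`
containing `X − u_t v_t*` and `P_{R(u_t)^⊥} X`, and `v_t` is the least-squares
solution, then `‖X − u_t v_t*‖_F ≤ √((1+δ)/(1−δ)) ‖X‖_F sin θ_t`. -/
theorem ls_update_bound {n₁ n₂ m : ℕ} (δ lam : ℝ) (hδ0 : 0 ≤ δ) (hδ1 : δ < 1)
    (hlam : 0 < lam)
    (u ut : EuclideanSpace ℂ (Fin n₁)) (v vt : EuclideanSpace ℂ (Fin n₂))
    (hu : ‖u‖ = 1) (hut : ‖ut‖ = 1) (hv : ‖v‖ = 1)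
    (A : Matrix (Fin n₁) (Fin n₂) ℂ →ₗ[ℂ] EuclideanSpace ℂ (Fin m))
    (C : Set (Matrix (Fin n₁) (Fin n₂) ℂ))
    (hrip : ∀ Z ∈ C, (1 - δ) * frob Z ^ 2 ≤ ‖A Z‖ ^ 2 ∧ ‖A Z‖ ^ 2 ≤ (1 + δ) * frob Z ^ 2)
    (hm₁ : (lam : ℂ) • outerProd u v - outerProd ut vt ∈ C)
    (hm₂ : ((1 : Matrix (Fin n₁) (Fin n₁) ℂ) - outerProd ut ut) * ((lam : ℂ) • outerProd u v) ∈ C)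
    (hls : ∀ y : EuclideanSpace ℂ (Fin n₂),
      ‖A ((lam : ℂ) • outerProd u v - outerProd ut vt)‖
        ≤ ‖A ((lam : ℂ) • outerProd u v - outerProd ut y)‖) :
    frob ((lam : ℂ) • outerProd u v - outerProd ut vt)
      ≤ Real.sqrt ((1 + δ) / (1 - δ)) * frob ((lam : ℂ) • outerProd u v)
        * vnorm (Matrix.mulVec ((1 : Matrix (Fin n₁) (Fin n₁) ℂ) - outerProd ut ut)
            (fun i => u i)) := by
  have h1δ : (0:ℝ) < 1 - δ := by linarith
  set c : ℂ := ∑ k, conj (ut k) * u k with hc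
  set w : Fin n₁ → ℂ := fun i => u i - ut i * c with hwdef
  -- mulVec computes w
  have hw : Matrix.mulVec ((1 : Matrix (Fin n₁) (Fin n₁) ℂ) - outerProd ut ut)
      (fun i => u i) = w := by
    funext i
    simp only [Matrix.mulVec, dotProduct, Matrix.sub_apply, Matrix.one_apply,
      outerProd, sub_mul, Finset.sum_sub_distrib, hwdef]
    simp [ite_mul, hc, Finset.mul_sum, mul_comm, mul_left_comm]
  -- the projected matrix is an outer product
  have hP : ((1 : Matrix (Fin n₁) (Fin n₁) ℂ) - outerProd ut ut) * ((lam : ℂ) • outerProd u v)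
      = fun i j => ((lam : ℂ) * w i) * conj (v j) := by
    funext i j
    simp only [Matrix.mul_apply, Matrix.sub_apply, Matrix.one_apply, Matrix.smul_apply,
      outerProd, smul_eq_mul, sub_mul, ite_mul, one_mul, zero_mul, Finset.sum_sub_distrib,
      Finset.sum_ite_eq, Finset.mem_univ, if_true, hwdef, hc, Finset.mul_sum]
    ring_nf
    rw [Finset.mul_sum]
    congr 1
    refine Finset.sum_congr rfl fun k _ => by ring
  -- the least-squares comparison point
  set yt : EuclideanSpace ℂ (Fin n₂) := WithLp.toLp 2 (fun j => (lam : ℂ) * conj c * v j) with hyt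
  have hE' : (lam : ℂ) • outerProd u v - outerProd ut yt
      = ((1 : Matrix (Fin n₁) (Fin n₁) ℂ) - outerProd ut ut) * ((lam : ℂ) • outerProd u v) := by
    rw [hP]; funext i j
    simp only [Matrix.sub_apply, Matrix.smul_apply, outerProd, smul_eq_mul, hyt, WithLp.ofLp_toLp, hwdef,
      map_mul, Complex.conj_conj, Complex.conj_ofReal]
    ring
  have hAle : ‖A ((lam : ℂ) • outerProd u v - outerProd ut vt)‖
      ≤ ‖A (((1 : Matrix (Fin n₁) (Fin n₁) ℂ) - outerProd ut ut) * ((lam : ℂ) • outerProd u v))‖ := by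
    rw [← hE']; exact hls yt
  obtain ⟨hL, -⟩ := hrip _ hm₁
  obtain ⟨-, hU⟩ := hrip _ hm₂
  set E := (lam : ℂ) • outerProd u v - outerProd ut vt with hE
  set P := ((1 : Matrix (Fin n₁) (Fin n₁) ℂ) - outerProd ut ut) * ((lam : ℂ) • outerProd u v)
    with hPdef
  have hchain : (1 - δ) * frob E ^ 2 ≤ (1 + δ) * frob P ^ 2 :=
    hL.trans ((pow_le_pow_left₀ (norm_nonneg _) hAle 2).trans hU)
  have hfX : frob ((lam : ℂ) • outerProd u v) = lam := by
    have h : (lam : ℂ) • outerProd u v = fun i j => ((lam : ℂ) * u i) * conj (v j) := by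
      funext i j; simp [outerProd, mul_assoc]
    rw [h, frob_outer, vnorm_smul, vnorm_eq_norm, vnorm_eq_norm, hu, hv,
      Complex.norm_real, Real.norm_eq_abs, abs_of_pos hlam]
    ring
  have hfP : frob P = lam * vnorm w := by
    rw [hP, frob_outer, vnorm_smul, show vnorm (fun j => v j) = ‖v‖ from vnorm_eq_norm v,
      hv, Complex.norm_real, Real.norm_eq_abs, abs_of_pos hlam]
    ring
  rw [hw, hfX]
  calc frob E = Real.sqrt (frob E ^ 2) := (Real.sqrt_sq (frob_nonneg E)).symm
    _ ≤ Real.sqrt ((1 + δ) / (1 - δ) * frob P ^ 2) := by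
        refine Real.sqrt_le_sqrt ?_
        rw [div_mul_eq_mul_div, le_div_iff₀ h1δ]
        nlinarith [hchain]
    _ = Real.sqrt ((1 + δ) / (1 - δ)) * frob P := by
        rw [Real.sqrt_mul (by positivity), Real.sqrt_sq (frob_nonneg P)]
    _ = Real.sqrt ((1 + δ) / (1 - δ)) * lam * vnorm w := by rw [hfP]; ring
end
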